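/- The B-sequent calculus for E^B is sound and complete: a B-sequent (Γ | Ψ ⇒ Φ | Δ) with finite sets of formulas is derivable in the calculus if and only if the corresponding B-entailment is valid, i.e., for every valuation v into FOUR, either some formula of Γ is not-accepted, or some formula of Δ is accepted, or some formula of Φ is not-rejected, or some formula of Ψ is rejected. Moreover, every valid finite B-sequent has a cut-free derivation. -/
import Mathlib


/-- The four truth-values of Dunn-Belnap logic. -/
inductive Four where
  | f | bot | top | t
deriving DecidableEq, Repr

namespace Four

/-- Whether the value contains the classical value T. -/
def hasT : Four → Bool
  | t => true | top => true | _ => false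

/-- Whether the value contains the classical value F. -/
def hasF : Four → Bool
  | f => true | top => true | _ => false

/-- Build a value from its T-part and F-part. -/
def mk : Bool → Bool → Four
  | true, true => top
  | true, false => t
  | false, true => f
  | false, false => bot

/-- Logical order: x ≤_t y iff x∩{T} ⊆ y∩{T} and y∩{F} ⊆ x∩{F}. -/
def leT (x y : Four) : Prop :=
  (x.hasT = true → y.hasT = true) ∧ (y.hasF = true → x.hasF = true)

/-- Information order: x ≤_i y iff x ⊆ y. -/
def leI (x y : Four) : Prop :=
  (x.hasT = true → y.hasT = true) ∧ (x.hasF = true → y.hasF = true)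

/-- Negation: swaps T and F membership. -/
def negT (x : Four) : Four := mk x.hasF x.hasT

/-- Infimum w.r.t. the logical order. -/
def meetT (x y : Four) : Four := mk (x.hasT && y.hasT) (x.hasF || y.hasF)

/-- Supremum w.r.t. the logical order. -/
def joinT (x y : Four) : Four := mk (x.hasT || y.hasT) (x.hasF && y.hasF)

/-- Infimum w.r.t. the information order. -/
def meetI (x y : Four) : Four := mk (x.hasT && y.hasT) (x.hasF && y.hasF)

/-- Supremum w.r.t. the information order. -/
def joinI (x y : Four) : Four := mk (x.hasT || y.hasT) (x.hasF || y.hasF)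

/-- Acceptance: designated set Y = {⊤, t}. -/
def acc (x : Four) : Prop := x = top ∨ x = t

/-- Rejection: set N = {f, ⊤}. -/
def rej (x : Four) : Prop := x = f ∨ x = top

end Four

/-- Formulas of the language S: propositional variables, ¬, ∧, ∨. -/
inductive Form where
  | var : ℕ → Form
  | neg : Form → Form
  | conj : Form → Form → Form
  | disj : Form → Form → Form
deriving DecidableEq

/-- A valuation (agent) is determined by its values on variables; it is
extended homomorphically to all formulas. -/
def Form.eval (v : ℕ → Four) : Form → Four
  | var n => v n
  | neg φ => (φ.eval v).negT
  | conj φ ψ => (φ.eval v).meetT (ψ.eval v)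
  | disj φ ψ => (φ.eval v).joinT (ψ.eval v)

open Four Form

/-- Truth-preserving (Tarskian) entailment ⊨ᵗ = ⊨⁴. -/
def entT (Γ : Set Form) (α : Form) : Prop :=
  ¬ ∃ v : ℕ → Four, (∀ γ ∈ Γ, acc (γ.eval v)) ∧ ¬ acc (α.eval v)

/-- Falsity entailment ⊨ᶠ: no valuation not-rejects all premises while rejecting the conclusion. -/
def entF (Γ : Set Form) (α : Form) : Prop :=
  ¬ ∃ v : ℕ → Four, (∀ γ ∈ Γ, ¬ rej (γ.eval v)) ∧ rej (α.eval v)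

/-- q-entailment: no valuation not-rejects all premises while not-accepting the conclusion. -/
def entQ (Γ : Set Form) (α : Form) : Prop :=
  ¬ ∃ v : ℕ → Four, (∀ γ ∈ Γ, ¬ rej (γ.eval v)) ∧ ¬ acc (α.eval v)

/-- p-entailment: no valuation accepts all premises while rejecting the conclusion. -/
def entP (Γ : Set Form) (α : Form) : Prop :=
  ¬ ∃ v : ℕ → Four, (∀ γ ∈ Γ, acc (γ.eval v)) ∧ rej (α.eval v)

/-- B-entailment (Γ | Ψ ⊨ Φ | Δ): no valuation accepts all of Γ,
not-accepts all of Δ, rejects all of Φ and not-rejects all of Ψ. -/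
def Bent (Γ Ψ Φ Δ : Set Form) : Prop :=
  ¬ ∃ v : ℕ → Four,
    (∀ γ ∈ Γ, acc (γ.eval v)) ∧ (∀ δ ∈ Δ, ¬ acc (δ.eval v)) ∧
    (∀ φ ∈ Φ, rej (φ.eval v)) ∧ (∀ ψ ∈ Ψ, ¬ rej (ψ.eval v))

/-- Derivability in the B-sequent calculus; the Boolean flag records whether
the cut rules are allowed (`true`) — a derivation with flag `false` is cut-free. -/
inductive Deriv : Bool → Finset Form → Finset Form → Finset Form → Finset Form → Prop
  | inT (c : Bool) (α : Form) : Deriv c {α} ∅ ∅ {α}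
  | inF (c : Bool) (α : Form) : Deriv c ∅ {α} {α} ∅
  | weak {c Γ Ψ Φ Δ} (Γ' Ψ' Φ' Δ' : Finset Form) :
      Deriv c Γ Ψ Φ Δ → Deriv c (Γ ∪ Γ') (Ψ ∪ Ψ') (Φ ∪ Φ') (Δ ∪ Δ')
  | cutT {Γ Ψ Φ Δ : Finset Form} {α : Form} :
      Deriv true (insert α Γ) Ψ Φ Δ → Deriv true Γ Ψ Φ (insert α Δ) →
      Deriv true Γ Ψ Φ Δ
  | cutF {Γ Ψ Φ Δ : Finset Form} {α : Form} :
      Deriv true Γ (insert α Ψ) Φ Δ → Deriv true Γ Ψ (insert α Φ) Δ →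
      Deriv true Γ Ψ Φ Δ
  | andR4 {c Γ Ψ Φ Δ} {α β : Form} :
      Deriv c Γ Ψ Φ (insert α Δ) → Deriv c Γ Ψ Φ (insert β Δ) →
      Deriv c Γ Ψ Φ (insert (Form.conj α β) Δ)
  | andR3 {c Γ Ψ Φ Δ} {α β : Form} :
      Deriv c Γ Ψ (insert α Φ) Δ → Deriv c Γ Ψ (insert β Φ) Δ →
      Deriv c Γ Ψ (insert (Form.conj α β) Φ) Δ
  | andL1 {c Γ Ψ Φ Δ} {α β : Form} :
      Deriv c (insert α (insert β Γ)) Ψ Φ Δ →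
      Deriv c (insert (Form.conj α β) Γ) Ψ Φ Δ
  | andL2 {c Γ Ψ Φ Δ} {α β : Form} :
      Deriv c Γ (insert α (insert β Ψ)) Φ Δ →
      Deriv c Γ (insert (Form.conj α β) Ψ) Φ Δ
  | orL1 {c Γ Ψ Φ Δ} {α β : Form} :
      Deriv c (insert α Γ) Ψ Φ Δ → Deriv c (insert β Γ) Ψ Φ Δ →
      Deriv c (insert (Form.disj α β) Γ) Ψ Φ Δ
  | orL2 {c Γ Ψ Φ Δ} {α β : Form} :
      Deriv c Γ (insert α Ψ) Φ Δ → Deriv c Γ (insert β Ψ) Φ Δ →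
      Deriv c Γ (insert (Form.disj α β) Ψ) Φ Δ
  | orR3 {c Γ Ψ Φ Δ} {α β : Form} :
      Deriv c Γ Ψ (insert α (insert β Φ)) Δ →
      Deriv c Γ Ψ (insert (Form.disj α β) Φ) Δ
  | orR4 {c Γ Ψ Φ Δ} {α β : Form} :
      Deriv c Γ Ψ Φ (insert α (insert β Δ)) →
      Deriv c Γ Ψ Φ (insert (Form.disj α β) Δ)
  | negL1 {c Γ Ψ Φ Δ} {α : Form} :
      Deriv c Γ Ψ (insert α Φ) Δ → Deriv c (insert (Form.neg α) Γ) Ψ Φ Δ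
  | negL2 {c Γ Ψ Φ Δ} {α : Form} :
      Deriv c Γ Ψ Φ (insert α Δ) → Deriv c Γ (insert (Form.neg α) Ψ) Φ Δ
  | negR3 {c Γ Ψ Φ Δ} {α : Form} :
      Deriv c (insert α Γ) Ψ Φ Δ → Deriv c Γ Ψ (insert (Form.neg α) Φ) Δ
  | negR4 {c Γ Ψ Φ Δ} {α : Form} :
      Deriv c Γ (insert α Ψ) Φ Δ → Deriv c Γ Ψ Φ (insert (Form.neg α) Δ)

/-- Semantic validity of a finite B-sequent. -/
def BvalidFin (Γ Ψ Φ Δ : Finset Form) : Prop :=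
  ∀ v : ℕ → Four,
    (∃ γ ∈ Γ, ¬ acc (γ.eval v)) ∨ (∃ δ ∈ Δ, acc (δ.eval v)) ∨
    (∃ φ ∈ Φ, ¬ rej (φ.eval v)) ∨ (∃ ψ ∈ Ψ, rej (ψ.eval v))


section BProofAux

lemma acc_negT (x : Four) : acc x.negT ↔ rej x := by
  cases x <;> simp [acc, rej, negT, meetT, joinT, mk, hasT, hasF]
lemma rej_negT (x : Four) : rej x.negT ↔ acc x := by
  cases x <;> simp [acc, rej, negT, meetT, joinT, mk, hasT, hasF]
lemma acc_meetT (x y : Four) : acc (x.meetT y) ↔ acc x ∧ acc y := by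
  cases x <;> cases y <;> simp [acc, rej, negT, meetT, joinT, mk, hasT, hasF]
lemma rej_meetT (x y : Four) : rej (x.meetT y) ↔ rej x ∨ rej y := by
  cases x <;> cases y <;> simp [acc, rej, negT, meetT, joinT, mk, hasT, hasF]
lemma acc_joinT (x y : Four) : acc (x.joinT y) ↔ acc x ∨ acc y := by
  cases x <;> cases y <;> simp [acc, rej, negT, meetT, joinT, mk, hasT, hasF]
lemma rej_joinT (x y : Four) : rej (x.joinT y) ↔ rej x ∧ rej y := by
  cases x <;> cases y <;> simp [acc, rej, negT, meetT, joinT, mk, hasT, hasF]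
lemma acc_mk (a b : Bool) : acc (mk a b) ↔ a = true := by
  cases a <;> cases b <;> simp [acc, mk]
lemma rej_mk (a b : Bool) : rej (mk a b) ↔ b = true := by
  cases a <;> cases b <;> simp [rej, mk]

lemma LnegL1 {P Q R S X : Prop} :
    ((¬X ∨ P) ∨ Q ∨ R ∨ S) ↔ (P ∨ Q ∨ ((¬X) ∨ R) ∨ S) := by tauto
lemma LnegL2 {P Q R S X : Prop} :
    (P ∨ Q ∨ R ∨ (X ∨ S)) ↔ (P ∨ (X ∨ Q) ∨ R ∨ S) := by tauto
lemma LnegR3 {P Q R S X : Prop} :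
    (P ∨ Q ∨ ((¬X) ∨ R) ∨ S) ↔ (((¬X) ∨ P) ∨ Q ∨ R ∨ S) := by tauto
lemma LnegR4 {P Q R S X : Prop} :
    (P ∨ (X ∨ Q) ∨ R ∨ S) ↔ (P ∨ Q ∨ R ∨ (X ∨ S)) := by tauto
lemma LandL1 {P Q R S X Y : Prop} :
    (((¬(X ∧ Y)) ∨ P) ∨ Q ∨ R ∨ S) ↔ (((¬X) ∨ (¬Y) ∨ P) ∨ Q ∨ R ∨ S) := by tauto
lemma LandL2 {P Q R S X Y : Prop} :
    (P ∨ Q ∨ R ∨ ((X ∨ Y) ∨ S)) ↔ (P ∨ Q ∨ R ∨ (X ∨ Y ∨ S)) := by tauto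
lemma LandR3 {P Q R S X Y : Prop} :
    (P ∨ Q ∨ ((¬(X ∨ Y)) ∨ R) ∨ S) ↔ ((P ∨ Q ∨ ((¬X) ∨ R) ∨ S) ∧ (P ∨ Q ∨ ((¬Y) ∨ R) ∨ S)) := by tauto
lemma LandR4 {P Q R S X Y : Prop} :
    (P ∨ ((X ∧ Y) ∨ Q) ∨ R ∨ S) ↔ ((P ∨ (X ∨ Q) ∨ R ∨ S) ∧ (P ∨ (Y ∨ Q) ∨ R ∨ S)) := by tauto
lemma LorL1 {P Q R S X Y : Prop} :
    (((¬(X ∨ Y)) ∨ P) ∨ Q ∨ R ∨ S) ↔ ((((¬X) ∨ P) ∨ Q ∨ R ∨ S) ∧ (((¬Y) ∨ P) ∨ Q ∨ R ∨ S)) := by tauto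
lemma LorL2 {P Q R S X Y : Prop} :
    (P ∨ Q ∨ R ∨ ((X ∧ Y) ∨ S)) ↔ ((P ∨ Q ∨ R ∨ (X ∨ S)) ∧ (P ∨ Q ∨ R ∨ (Y ∨ S))) := by tauto
lemma LorR3 {P Q R S X Y : Prop} :
    (P ∨ Q ∨ ((¬(X ∧ Y)) ∨ R) ∨ S) ↔ (P ∨ Q ∨ ((¬X) ∨ (¬Y) ∨ R) ∨ S) := by tauto
lemma LorR4 {P Q R S X Y : Prop} :
    (P ∨ ((X ∨ Y) ∨ Q) ∨ R ∨ S) ↔ (P ∨ (X ∨ Y ∨ Q) ∨ R ∨ S) := by tauto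

/-- Weight of a formula, for the induction measure. -/
def wt : Form → ℕ
  | .var _ => 1
  | .neg φ => wt φ + 1
  | .conj φ ψ => wt φ + wt ψ + 1
  | .disj φ ψ => wt φ + wt ψ + 1

/-- Measure of a sequent. -/
def ms (Γ Ψ Φ Δ : Finset Form) : ℕ := Γ.sum wt + Ψ.sum wt + Φ.sum wt + Δ.sum wt

lemma sum_ins (a : Form) (s : Finset Form) : (insert a s).sum wt ≤ wt a + s.sum wt := by
  by_cases h : a ∈ s
  · rw [Finset.insert_eq_self.2 h]; omega
  · rw [Finset.sum_insert h]

lemma wt_sum_mem {γ : Form} {s : Finset Form} (h : γ ∈ s) :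
    s.sum wt = wt γ + (s.erase γ).sum wt := (Finset.add_sum_erase s wt h).symm

/-- Soundness of the B-sequent calculus. -/
lemma Deriv.sound {c : Bool} {Γ Ψ Φ Δ : Finset Form} (h : Deriv c Γ Ψ Φ Δ) :
    BvalidFin Γ Ψ Φ Δ := by
  induction h with
  | inT c α =>
    intro v
    by_cases h : acc (α.eval v)
    · exact Or.inr (Or.inl ⟨α, Finset.mem_singleton_self α, h⟩)
    · exact Or.inl ⟨α, Finset.mem_singleton_self α, h⟩
  | inF c α =>
    intro v
    by_cases h : rej (α.eval v)
    · exact Or.inr (Or.inr (Or.inr ⟨α, Finset.mem_singleton_self α, h⟩))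
    · exact Or.inr (Or.inr (Or.inl ⟨α, Finset.mem_singleton_self α, h⟩))
  | weak Γ' Ψ' Φ' Δ' h ih =>
    intro v
    rcases ih v with ⟨x, hx, hh⟩ | ⟨x, hx, hh⟩ | ⟨x, hx, hh⟩ | ⟨x, hx, hh⟩
    · exact Or.inl ⟨x, Finset.mem_union_left _ hx, hh⟩
    · exact Or.inr (Or.inl ⟨x, Finset.mem_union_left _ hx, hh⟩)
    · exact Or.inr (Or.inr (Or.inl ⟨x, Finset.mem_union_left _ hx, hh⟩))
    · exact Or.inr (Or.inr (Or.inr ⟨x, Finset.mem_union_left _ hx, hh⟩))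
  | @cutT Γ' Ψ' Φ' Δ' α h1 h2 ih1 ih2 =>
    intro v
    by_cases hα : acc (α.eval v)
    · rcases ih1 v with ⟨x, hx, hh⟩ | rest
      · rcases Finset.mem_insert.1 hx with rfl | hx'
        · exact absurd hα hh
        · exact Or.inl ⟨x, hx', hh⟩
      · exact Or.inr rest
    · rcases ih2 v with a | ⟨x, hx, hh⟩ | rest
      · exact Or.inl a
      · rcases Finset.mem_insert.1 hx with rfl | hx'
        · exact absurd hh hα
        · exact Or.inr (Or.inl ⟨x, hx', hh⟩)
      · exact Or.inr (Or.inr rest)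
  | @cutF Γ' Ψ' Φ' Δ' α h1 h2 ih1 ih2 =>
    intro v
    by_cases hα : rej (α.eval v)
    · rcases ih2 v with a | b | ⟨x, hx, hh⟩ | d
      · exact Or.inl a
      · exact Or.inr (Or.inl b)
      · rcases Finset.mem_insert.1 hx with rfl | hx'
        · exact absurd hα hh
        · exact Or.inr (Or.inr (Or.inl ⟨x, hx', hh⟩))
      · exact Or.inr (Or.inr (Or.inr d))
    · rcases ih1 v with a | b | cc | ⟨x, hx, hh⟩
      · exact Or.inl a
      · exact Or.inr (Or.inl b)
      · exact Or.inr (Or.inr (Or.inl cc))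
      · rcases Finset.mem_insert.1 hx with rfl | hx'
        · exact absurd hh hα
        · exact Or.inr (Or.inr (Or.inr ⟨x, hx', hh⟩))
  | andR4 h1 h2 ih1 ih2 =>
    intro v
    have g1 := ih1 v
    have g2 := ih2 v
    simp only [Finset.exists_mem_insert, Form.eval, acc_negT, rej_negT, acc_meetT, rej_meetT, acc_joinT, rej_joinT] at g1 g2 ⊢
    exact (LandR4).2 ⟨g1, g2⟩
  | andR3 h1 h2 ih1 ih2 =>
    intro v
    have g1 := ih1 v
    have g2 := ih2 v
    simp only [Finset.exists_mem_insert, Form.eval, acc_negT, rej_negT, acc_meetT, rej_meetT, acc_joinT, rej_joinT] at g1 g2 ⊢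
    exact (LandR3).2 ⟨g1, g2⟩
  | andL1 h ih =>
    intro v
    have g := ih v
    simp only [Finset.exists_mem_insert, Form.eval, acc_negT, rej_negT, acc_meetT, rej_meetT, acc_joinT, rej_joinT] at g ⊢
    exact (LandL1).2 g
  | andL2 h ih =>
    intro v
    have g := ih v
    simp only [Finset.exists_mem_insert, Form.eval, acc_negT, rej_negT, acc_meetT, rej_meetT, acc_joinT, rej_joinT] at g ⊢
    exact (LandL2).2 g
  | orL1 h1 h2 ih1 ih2 =>
    intro v
    have g1 := ih1 v
    have g2 := ih2 v
    simp only [Finset.exists_mem_insert, Form.eval, acc_negT, rej_negT, acc_meetT, rej_meetT, acc_joinT, rej_joinT] at g1 g2 ⊢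
    exact (LorL1).2 ⟨g1, g2⟩
  | orL2 h1 h2 ih1 ih2 =>
    intro v
    have g1 := ih1 v
    have g2 := ih2 v
    simp only [Finset.exists_mem_insert, Form.eval, acc_negT, rej_negT, acc_meetT, rej_meetT, acc_joinT, rej_joinT] at g1 g2 ⊢
    exact (LorL2).2 ⟨g1, g2⟩
  | orR3 h ih =>
    intro v
    have g := ih v
    simp only [Finset.exists_mem_insert, Form.eval, acc_negT, rej_negT, acc_meetT, rej_meetT, acc_joinT, rej_joinT] at g ⊢
    exact (LorR3).2 g
  | orR4 h ih =>
    intro v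
    have g := ih v
    simp only [Finset.exists_mem_insert, Form.eval, acc_negT, rej_negT, acc_meetT, rej_meetT, acc_joinT, rej_joinT] at g ⊢
    exact (LorR4).2 g
  | negL1 h ih =>
    intro v
    have g := ih v
    simp only [Finset.exists_mem_insert, Form.eval, acc_negT, rej_negT, acc_meetT, rej_meetT, acc_joinT, rej_joinT] at g ⊢
    exact (LnegL1).2 g
  | negL2 h ih =>
    intro v
    have g := ih v
    simp only [Finset.exists_mem_insert, Form.eval, acc_negT, rej_negT, acc_meetT, rej_meetT, acc_joinT, rej_joinT] at g ⊢
    exact (LnegL2).2 g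
  | negR3 h ih =>
    intro v
    have g := ih v
    simp only [Finset.exists_mem_insert, Form.eval, acc_negT, rej_negT, acc_meetT, rej_meetT, acc_joinT, rej_joinT] at g ⊢
    exact (LnegR3).2 g
  | negR4 h ih =>
    intro v
    have g := ih v
    simp only [Finset.exists_mem_insert, Form.eval, acc_negT, rej_negT, acc_meetT, rej_meetT, acc_joinT, rej_joinT] at g ⊢
    exact (LnegR4).2 g

/-- Completeness (uniform in the cut flag, hence also cut-free). -/
lemma Deriv.complete (c : Bool) :
    ∀ n Γ Ψ Φ Δ, ms Γ Ψ Φ Δ = n → BvalidFin Γ Ψ Φ Δ → Deriv c Γ Ψ Φ Δ := by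
  intro n
  induction n using Nat.strong_induction_on with
  | _ n IH =>
  intro Γ Ψ Φ Δ hms hv
  by_cases hΓc : ∃ x ∈ Γ, ∀ m, x ≠ Form.var m
  · obtain ⟨x, hmem, hnv⟩ := hΓc
    cases x with
    | var m => exact absurd rfl (hnv m)
    | neg α =>
      have hins : insert (Form.neg α) (Γ.erase (Form.neg α)) = Γ := Finset.insert_erase hmem
      have hsm := wt_sum_mem hmem
      simp only [wt] at hsm
      have hval0 : BvalidFin (Γ.erase (Form.neg α)) Ψ (insert α Φ) Δ := by
        intro v
        have h := hv v
        rw [← hins] at h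
        simp only [Finset.exists_mem_insert, Form.eval, acc_negT, rej_negT, acc_meetT, rej_meetT, acc_joinT, rej_joinT] at h ⊢
        exact (LnegL1).1 h
      have hlt0 : ms (Γ.erase (Form.neg α)) Ψ (insert α Φ) Δ < n := by
        have hi0 := sum_ins α Φ
        simp only [ms] at hms ⊢
        omega
      have hd0 := IH _ hlt0 _ _ _ _ rfl hval0
      rw [← hins]
      exact Deriv.negL1 hd0
    | conj α β =>
      have hins : insert (Form.conj α β) (Γ.erase (Form.conj α β)) = Γ := Finset.insert_erase hmem
      have hsm := wt_sum_mem hmem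
      simp only [wt] at hsm
      have hval0 : BvalidFin (insert α (insert β (Γ.erase (Form.conj α β)))) Ψ Φ Δ := by
        intro v
        have h := hv v
        rw [← hins] at h
        simp only [Finset.exists_mem_insert, Form.eval, acc_negT, rej_negT, acc_meetT, rej_meetT, acc_joinT, rej_joinT] at h ⊢
        exact (LandL1).1 h
      have hlt0 : ms (insert α (insert β (Γ.erase (Form.conj α β)))) Ψ Φ Δ < n := by
        have hi0 := sum_ins α (insert β (Γ.erase (Form.conj α β)))
        have hi1 := sum_ins β (Γ.erase (Form.conj α β))
        simp only [ms] at hms ⊢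
        omega
      have hd0 := IH _ hlt0 _ _ _ _ rfl hval0
      rw [← hins]
      exact Deriv.andL1 hd0
    | disj α β =>
      have hins : insert (Form.disj α β) (Γ.erase (Form.disj α β)) = Γ := Finset.insert_erase hmem
      have hsm := wt_sum_mem hmem
      simp only [wt] at hsm
      have hval0 : BvalidFin (insert α (Γ.erase (Form.disj α β))) Ψ Φ Δ := by
        intro v
        have h := hv v
        rw [← hins] at h
        simp only [Finset.exists_mem_insert, Form.eval, acc_negT, rej_negT, acc_meetT, rej_meetT, acc_joinT, rej_joinT] at h ⊢
        exact ((LorL1).1 h).1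
      have hlt0 : ms (insert α (Γ.erase (Form.disj α β))) Ψ Φ Δ < n := by
        have hi0 := sum_ins α (Γ.erase (Form.disj α β))
        simp only [ms] at hms ⊢
        omega
      have hd0 := IH _ hlt0 _ _ _ _ rfl hval0
      have hval1 : BvalidFin (insert β (Γ.erase (Form.disj α β))) Ψ Φ Δ := by
        intro v
        have h := hv v
        rw [← hins] at h
        simp only [Finset.exists_mem_insert, Form.eval, acc_negT, rej_negT, acc_meetT, rej_meetT, acc_joinT, rej_joinT] at h ⊢
        exact ((LorL1).1 h).2
      have hlt1 : ms (insert β (Γ.erase (Form.disj α β))) Ψ Φ Δ < n := by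
        have hi0 := sum_ins β (Γ.erase (Form.disj α β))
        simp only [ms] at hms ⊢
        omega
      have hd1 := IH _ hlt1 _ _ _ _ rfl hval1
      rw [← hins]
      exact Deriv.orL1 hd0 hd1
  ·
    by_cases hΨc : ∃ x ∈ Ψ, ∀ m, x ≠ Form.var m
    · obtain ⟨x, hmem, hnv⟩ := hΨc
      cases x with
      | var m => exact absurd rfl (hnv m)
      | neg α =>
        have hins : insert (Form.neg α) (Ψ.erase (Form.neg α)) = Ψ := Finset.insert_erase hmem
        have hsm := wt_sum_mem hmem
        simp only [wt] at hsm
        have hval0 : BvalidFin Γ (Ψ.erase (Form.neg α)) Φ (insert α Δ) := by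
          intro v
          have h := hv v
          rw [← hins] at h
          simp only [Finset.exists_mem_insert, Form.eval, acc_negT, rej_negT, acc_meetT, rej_meetT, acc_joinT, rej_joinT] at h ⊢
          exact (LnegL2).1 h
        have hlt0 : ms Γ (Ψ.erase (Form.neg α)) Φ (insert α Δ) < n := by
          have hi0 := sum_ins α Δ
          simp only [ms] at hms ⊢
          omega
        have hd0 := IH _ hlt0 _ _ _ _ rfl hval0
        rw [← hins]
        exact Deriv.negL2 hd0
      | conj α β =>
        have hins : insert (Form.conj α β) (Ψ.erase (Form.conj α β)) = Ψ := Finset.insert_erase hmem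
        have hsm := wt_sum_mem hmem
        simp only [wt] at hsm
        have hval0 : BvalidFin Γ (insert α (insert β (Ψ.erase (Form.conj α β)))) Φ Δ := by
          intro v
          have h := hv v
          rw [← hins] at h
          simp only [Finset.exists_mem_insert, Form.eval, acc_negT, rej_negT, acc_meetT, rej_meetT, acc_joinT, rej_joinT] at h ⊢
          exact (LandL2).1 h
        have hlt0 : ms Γ (insert α (insert β (Ψ.erase (Form.conj α β)))) Φ Δ < n := by
          have hi0 := sum_ins α (insert β (Ψ.erase (Form.conj α β)))
          have hi1 := sum_ins β (Ψ.erase (Form.conj α β))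
          simp only [ms] at hms ⊢
          omega
        have hd0 := IH _ hlt0 _ _ _ _ rfl hval0
        rw [← hins]
        exact Deriv.andL2 hd0
      | disj α β =>
        have hins : insert (Form.disj α β) (Ψ.erase (Form.disj α β)) = Ψ := Finset.insert_erase hmem
        have hsm := wt_sum_mem hmem
        simp only [wt] at hsm
        have hval0 : BvalidFin Γ (insert α (Ψ.erase (Form.disj α β))) Φ Δ := by
          intro v
          have h := hv v
          rw [← hins] at h
          simp only [Finset.exists_mem_insert, Form.eval, acc_negT, rej_negT, acc_meetT, rej_meetT, acc_joinT, rej_joinT] at h ⊢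
          exact ((LorL2).1 h).1
        have hlt0 : ms Γ (insert α (Ψ.erase (Form.disj α β))) Φ Δ < n := by
          have hi0 := sum_ins α (Ψ.erase (Form.disj α β))
          simp only [ms] at hms ⊢
          omega
        have hd0 := IH _ hlt0 _ _ _ _ rfl hval0
        have hval1 : BvalidFin Γ (insert β (Ψ.erase (Form.disj α β))) Φ Δ := by
          intro v
          have h := hv v
          rw [← hins] at h
          simp only [Finset.exists_mem_insert, Form.eval, acc_negT, rej_negT, acc_meetT, rej_meetT, acc_joinT, rej_joinT] at h ⊢
          exact ((LorL2).1 h).2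
        have hlt1 : ms Γ (insert β (Ψ.erase (Form.disj α β))) Φ Δ < n := by
          have hi0 := sum_ins β (Ψ.erase (Form.disj α β))
          simp only [ms] at hms ⊢
          omega
        have hd1 := IH _ hlt1 _ _ _ _ rfl hval1
        rw [← hins]
        exact Deriv.orL2 hd0 hd1
    ·
      by_cases hΦc : ∃ x ∈ Φ, ∀ m, x ≠ Form.var m
      · obtain ⟨x, hmem, hnv⟩ := hΦc
        cases x with
        | var m => exact absurd rfl (hnv m)
        | neg α =>
          have hins : insert (Form.neg α) (Φ.erase (Form.neg α)) = Φ := Finset.insert_erase hmem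
          have hsm := wt_sum_mem hmem
          simp only [wt] at hsm
          have hval0 : BvalidFin (insert α Γ) Ψ (Φ.erase (Form.neg α)) Δ := by
            intro v
            have h := hv v
            rw [← hins] at h
            simp only [Finset.exists_mem_insert, Form.eval, acc_negT, rej_negT, acc_meetT, rej_meetT, acc_joinT, rej_joinT] at h ⊢
            exact (LnegR3).1 h
          have hlt0 : ms (insert α Γ) Ψ (Φ.erase (Form.neg α)) Δ < n := by
            have hi0 := sum_ins α Γ
            simp only [ms] at hms ⊢
            omega
          have hd0 := IH _ hlt0 _ _ _ _ rfl hval0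
          rw [← hins]
          exact Deriv.negR3 hd0
        | conj α β =>
          have hins : insert (Form.conj α β) (Φ.erase (Form.conj α β)) = Φ := Finset.insert_erase hmem
          have hsm := wt_sum_mem hmem
          simp only [wt] at hsm
          have hval0 : BvalidFin Γ Ψ (insert α (Φ.erase (Form.conj α β))) Δ := by
            intro v
            have h := hv v
            rw [← hins] at h
            simp only [Finset.exists_mem_insert, Form.eval, acc_negT, rej_negT, acc_meetT, rej_meetT, acc_joinT, rej_joinT] at h ⊢
            exact ((LandR3).1 h).1
          have hlt0 : ms Γ Ψ (insert α (Φ.erase (Form.conj α β))) Δ < n := by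
            have hi0 := sum_ins α (Φ.erase (Form.conj α β))
            simp only [ms] at hms ⊢
            omega
          have hd0 := IH _ hlt0 _ _ _ _ rfl hval0
          have hval1 : BvalidFin Γ Ψ (insert β (Φ.erase (Form.conj α β))) Δ := by
            intro v
            have h := hv v
            rw [← hins] at h
            simp only [Finset.exists_mem_insert, Form.eval, acc_negT, rej_negT, acc_meetT, rej_meetT, acc_joinT, rej_joinT] at h ⊢
            exact ((LandR3).1 h).2
          have hlt1 : ms Γ Ψ (insert β (Φ.erase (Form.conj α β))) Δ < n := by
            have hi0 := sum_ins β (Φ.erase (Form.conj α β))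
            simp only [ms] at hms ⊢
            omega
          have hd1 := IH _ hlt1 _ _ _ _ rfl hval1
          rw [← hins]
          exact Deriv.andR3 hd0 hd1
        | disj α β =>
          have hins : insert (Form.disj α β) (Φ.erase (Form.disj α β)) = Φ := Finset.insert_erase hmem
          have hsm := wt_sum_mem hmem
          simp only [wt] at hsm
          have hval0 : BvalidFin Γ Ψ (insert α (insert β (Φ.erase (Form.disj α β)))) Δ := by
            intro v
            have h := hv v
            rw [← hins] at h
            simp only [Finset.exists_mem_insert, Form.eval, acc_negT, rej_negT, acc_meetT, rej_meetT, acc_joinT, rej_joinT] at h ⊢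
            exact (LorR3).1 h
          have hlt0 : ms Γ Ψ (insert α (insert β (Φ.erase (Form.disj α β)))) Δ < n := by
            have hi0 := sum_ins α (insert β (Φ.erase (Form.disj α β)))
            have hi1 := sum_ins β (Φ.erase (Form.disj α β))
            simp only [ms] at hms ⊢
            omega
          have hd0 := IH _ hlt0 _ _ _ _ rfl hval0
          rw [← hins]
          exact Deriv.orR3 hd0
      ·
        by_cases hΔc : ∃ x ∈ Δ, ∀ m, x ≠ Form.var m
        · obtain ⟨x, hmem, hnv⟩ := hΔc
          cases x with
          | var m => exact absurd rfl (hnv m)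
          | neg α =>
            have hins : insert (Form.neg α) (Δ.erase (Form.neg α)) = Δ := Finset.insert_erase hmem
            have hsm := wt_sum_mem hmem
            simp only [wt] at hsm
            have hval0 : BvalidFin Γ (insert α Ψ) Φ (Δ.erase (Form.neg α)) := by
              intro v
              have h := hv v
              rw [← hins] at h
              simp only [Finset.exists_mem_insert, Form.eval, acc_negT, rej_negT, acc_meetT, rej_meetT, acc_joinT, rej_joinT] at h ⊢
              exact (LnegR4).1 h
            have hlt0 : ms Γ (insert α Ψ) Φ (Δ.erase (Form.neg α)) < n := by
              have hi0 := sum_ins α Ψ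
              simp only [ms] at hms ⊢
              omega
            have hd0 := IH _ hlt0 _ _ _ _ rfl hval0
            rw [← hins]
            exact Deriv.negR4 hd0
          | conj α β =>
            have hins : insert (Form.conj α β) (Δ.erase (Form.conj α β)) = Δ := Finset.insert_erase hmem
            have hsm := wt_sum_mem hmem
            simp only [wt] at hsm
            have hval0 : BvalidFin Γ Ψ Φ (insert α (Δ.erase (Form.conj α β))) := by
              intro v
              have h := hv v
              rw [← hins] at h
              simp only [Finset.exists_mem_insert, Form.eval, acc_negT, rej_negT, acc_meetT, rej_meetT, acc_joinT, rej_joinT] at h ⊢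
              exact ((LandR4).1 h).1
            have hlt0 : ms Γ Ψ Φ (insert α (Δ.erase (Form.conj α β))) < n := by
              have hi0 := sum_ins α (Δ.erase (Form.conj α β))
              simp only [ms] at hms ⊢
              omega
            have hd0 := IH _ hlt0 _ _ _ _ rfl hval0
            have hval1 : BvalidFin Γ Ψ Φ (insert β (Δ.erase (Form.conj α β))) := by
              intro v
              have h := hv v
              rw [← hins] at h
              simp only [Finset.exists_mem_insert, Form.eval, acc_negT, rej_negT, acc_meetT, rej_meetT, acc_joinT, rej_joinT] at h ⊢
              exact ((LandR4).1 h).2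
            have hlt1 : ms Γ Ψ Φ (insert β (Δ.erase (Form.conj α β))) < n := by
              have hi0 := sum_ins β (Δ.erase (Form.conj α β))
              simp only [ms] at hms ⊢
              omega
            have hd1 := IH _ hlt1 _ _ _ _ rfl hval1
            rw [← hins]
            exact Deriv.andR4 hd0 hd1
          | disj α β =>
            have hins : insert (Form.disj α β) (Δ.erase (Form.disj α β)) = Δ := Finset.insert_erase hmem
            have hsm := wt_sum_mem hmem
            simp only [wt] at hsm
            have hval0 : BvalidFin Γ Ψ Φ (insert α (insert β (Δ.erase (Form.disj α β)))) := by
              intro v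
              have h := hv v
              rw [← hins] at h
              simp only [Finset.exists_mem_insert, Form.eval, acc_negT, rej_negT, acc_meetT, rej_meetT, acc_joinT, rej_joinT] at h ⊢
              exact (LorR4).1 h
            have hlt0 : ms Γ Ψ Φ (insert α (insert β (Δ.erase (Form.disj α β)))) < n := by
              have hi0 := sum_ins α (insert β (Δ.erase (Form.disj α β)))
              have hi1 := sum_ins β (Δ.erase (Form.disj α β))
              simp only [ms] at hms ⊢
              omega
            have hd0 := IH _ hlt0 _ _ _ _ rfl hval0
            rw [← hins]
            exact Deriv.orR4 hd0
        ·
          push_neg at hΓc hΨc hΦc hΔc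
          have key : (∃ x ∈ Γ, x ∈ Δ) ∨ (∃ x ∈ Ψ, x ∈ Φ) := by
            by_contra hk
            push_neg at hk
            obtain ⟨h1, h2⟩ := hk
            have hvv := hv (fun n => Four.mk (decide (Form.var n ∈ Γ)) (decide (Form.var n ∈ Φ)))
            rcases hvv with ⟨x, hx, hh⟩ | ⟨x, hx, hh⟩ | ⟨x, hx, hh⟩ | ⟨x, hx, hh⟩
            · obtain ⟨m, rfl⟩ := hΓc x hx
              exact hh (by simp [Form.eval, acc_mk, hx])
            · obtain ⟨m, rfl⟩ := hΔc x hx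
              have hm : Form.var m ∈ Γ := by simpa [Form.eval, acc_mk] using hh
              exact h1 _ hm hx
            · obtain ⟨m, rfl⟩ := hΦc x hx
              exact hh (by simp [Form.eval, rej_mk, hx])
            · obtain ⟨m, rfl⟩ := hΨc x hx
              have hm : Form.var m ∈ Φ := by simpa [Form.eval, rej_mk] using hh
              exact h2 _ hx hm
          rcases key with ⟨x, hx1, hx2⟩ | ⟨x, hx1, hx2⟩
          · have d := Deriv.weak (c := c) Γ Ψ Φ Δ (Deriv.inT c x)
            simpa [Finset.union_eq_right.2 (Finset.singleton_subset_iff.2 hx1),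
              Finset.union_eq_right.2 (Finset.singleton_subset_iff.2 hx2)] using d
          · have d := Deriv.weak (c := c) Γ Ψ Φ Δ (Deriv.inF c x)
            simpa [Finset.union_eq_right.2 (Finset.singleton_subset_iff.2 hx1),
              Finset.union_eq_right.2 (Finset.singleton_subset_iff.2 hx2)] using d


end BProofAux

/-- the B-sequent calculus is sound and complete, and every
valid finite B-sequent has a cut-free derivation. -/
theorem Bcalculus_sound_complete (Γ Ψ Φ Δ : Finset Form) :
    (Deriv true Γ Ψ Φ Δ ↔ BvalidFin Γ Ψ Φ Δ) ∧
    (BvalidFin Γ Ψ Φ Δ → Deriv false Γ Ψ Φ Δ) := by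
  refine ⟨⟨Deriv.sound, fun h => Deriv.complete true _ Γ Ψ Φ Δ rfl h⟩,
    fun h => Deriv.complete false _ Γ Ψ Φ Δ rfl h⟩
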